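/- There exists a universal constant M₀ > 0 (independent of the channel and of a, b) such that for any a < b and any vector field v = (v₁,v₂) ∈ C¹ on the closure of Ω_{a,b} having zero flux (i.e. ∫_{f₁(x₁)}^{f₂(x₁)} v₁(x₁,x₂) dx₂ = 0 for every x₁ ∈ (a,b)), one has ∫_{Ω_{a,b}} |v₁(x)/f(x₁)|² dx ≤ M₀² ∫_{Ω_{a,b}} |∂_{x₂} v₁(x)|² dx. -/

import Mathlib

open MeasureTheory Set

/-- The channel piece `Ω_{a,b} = {x ∈ Ω : a < x₁ < b}` where
`Ω = {(x₁,x₂) : f₁(x₁) < x₂ < f₂(x₁)}`. -/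
def chan (f₁ f₂ : ℝ → ℝ) (a b : ℝ) : Set (ℝ × ℝ) :=
  {x : ℝ × ℝ | a < x.1 ∧ x.1 < b ∧ f₁ x.1 < x.2 ∧ x.2 < f₂ x.1}


lemma bound_fderiv {v : ℝ × ℝ → ℝ} {s U : Set (ℝ × ℝ)} (hs : IsCompact s)
    (hv : ContDiffOn ℝ 1 v s) (hUopen : IsOpen U) (hUs : U ⊆ s) :
    ∃ K : ℝ, 0 ≤ K ∧ ∀ x ∈ U, ‖fderiv ℝ v x‖ ≤ K := by
  have key : ∀ x ∈ s, ∃ w : Set (ℝ × ℝ), ∃ K : ℝ, IsOpen w ∧ x ∈ w ∧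
      ∀ y ∈ w ∩ U, ‖fderiv ℝ v y‖ ≤ K := by
    intro x hx
    obtain ⟨u, hu, p, hp⟩ := hv x hx 1 (by norm_num)
    rw [insert_eq_of_mem hx] at hu
    obtain ⟨w, hwopen, hxw, hws⟩ := mem_nhdsWithin.mp hu
    have hxu : x ∈ u := hws ⟨hxw, hx⟩
    -- continuity of y ↦ p y 1 at x within u
    have hcont : ContinuousWithinAt (fun y => p y 1) u x :=
      (hp.cont 1 le_rfl).continuousWithinAt hxu
    have hev : ∀ᶠ y in nhdsWithin x u, ‖p y 1‖ < ‖p x 1‖ + 1 := by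
      have : Metric.ball (p x 1) 1 ∈ nhds (p x 1) := Metric.ball_mem_nhds _ one_pos
      filter_upwards [hcont this] with y hy
      have := norm_lt_of_mem_ball hy
      linarith [norm_le_insert' (p y 1) (p x 1)]
    obtain ⟨w', hw'open, hxw', hw'⟩ := mem_nhdsWithin.mp hev
    refine ⟨w ∩ w', ‖p x 1‖ + 1, hwopen.inter hw'open, ⟨hxw, hxw'⟩, ?_⟩
    rintro y ⟨⟨hyw, hyw'⟩, hyU⟩
    have hyu : y ∈ u := hws ⟨hyw, hUs hyU⟩
    have hbound : ‖p y 1‖ < ‖p x 1‖ + 1 := hw' ⟨hyw', hyu⟩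
    have hder : HasFDerivWithinAt v ((continuousMultilinearCurryFin1 ℝ (ℝ × ℝ) ℝ) (p y 1)) u y :=
      hp.hasFDerivWithinAt (by simp) hyu
    have hunhds : u ∈ nhds y := by
      have : w ∩ U ∈ nhds y := (hwopen.inter hUopen).mem_nhds ⟨hyw, hyU⟩
      exact Filter.mem_of_superset this fun z hz => hws ⟨hz.1, hUs hz.2⟩
    have hat : HasFDerivAt v ((continuousMultilinearCurryFin1 ℝ (ℝ × ℝ) ℝ) (p y 1)) y :=
      hder.hasFDerivAt hunhds
    rw [hat.fderiv]
    rw [show ‖(continuousMultilinearCurryFin1 ℝ (ℝ × ℝ) ℝ) (p y 1)‖ = ‖p y 1‖ from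
      (continuousMultilinearCurryFin1 ℝ (ℝ × ℝ) ℝ).norm_map _]
    exact hbound.le
  choose w K hwopen hxw hbound using key
  obtain ⟨t, ht⟩ := hs.elim_finite_subcover (fun z : s => w z z.2)
    (fun z => hwopen z z.2) (fun x hx => mem_iUnion.2 ⟨⟨x, hx⟩, hxw x hx⟩)
  classical
  set KS : Finset ℝ := insert 0 (t.image fun z : s => K z.1 z.2) with hKS
  have hne : KS.Nonempty := ⟨0, Finset.mem_insert_self _ _⟩
  refine ⟨KS.max' hne, Finset.le_max' _ _ (Finset.mem_insert_self _ _), ?_⟩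
  intro x hxU
  have hx' := ht (hUs hxU)
  rw [mem_iUnion₂] at hx'
  obtain ⟨z, hzt, hxz⟩ := hx'
  refine le_trans (hbound z z.2 x ⟨hxz, hxU⟩) (Finset.le_max' _ _ ?_)
  rw [hKS]
  exact Finset.mem_insert_of_mem (Finset.mem_image_of_mem (fun z : s => K z.1 z.2) hzt)

lemma slice_poincare {u g : ℝ → ℝ} {c e K : ℝ} (hce : c < e)
    (hu : ContinuousOn u (Icc c e))
    (hder : ∀ t ∈ Ioo c e, HasDerivAt u (g t) t)
    (hg : Measurable g) (hgK : ∀ t ∈ Ioo c e, |g t| ≤ K)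
    (hzero : (∫ t in c..e, u t) = 0) :
    (∫ t in Ioo c e, (u t / (e - c)) ^ 2) ≤ ∫ t in Ioo c e, g t ^ 2 := by
  have hL : 0 < e - c := sub_pos.2 hce
  have hIccIoo : volume.restrict (Icc c e) = volume.restrict (Ioo c e) :=
    (Measure.restrict_congr_set Ioo_ae_eq_Icc).symm
  have hvol : volume (Ioo c e) < ⊤ := by
    rw [Real.volume_Ioo]; exact ENNReal.ofReal_lt_top
  haveI hfin : IsFiniteMeasure (volume.restrict (Ioo c e)) :=
    ⟨by rwa [Measure.restrict_apply_univ]⟩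
  -- integrability of g, |g|, g² on Ioo c e
  have hgint : IntegrableOn g (Ioo c e) := by
    refine ⟨hg.aestronglyMeasurable, HasFiniteIntegral.of_bounded (C := K) ?_⟩
    exact (ae_restrict_iff' measurableSet_Ioo).2 (Filter.Eventually.of_forall fun t ht => by
      simpa using hgK t ht)
  have habs : IntegrableOn (fun t => |g t|) (Ioo c e) := hgint.abs
  have hg2 : IntegrableOn (fun t => g t ^ 2) (Ioo c e) := by
    refine ⟨((hg.pow_const 2).aestronglyMeasurable), HasFiniteIntegral.of_bounded (C := K ^ 2) ?_⟩
    refine (ae_restrict_iff' measurableSet_Ioo).2 (Filter.Eventually.of_forall fun t ht => ?_)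
    have := hgK t ht
    have h0 := abs_nonneg (g t)
    simp only [Real.norm_eq_abs, abs_pow]
    nlinarith
  have hgIcc : IntegrableOn g (Icc c e) := by rw [IntegrableOn, hIccIoo]; exact hgint
  -- interval integrability of g between points of Icc
  have hgiv : ∀ t₁ t₂, t₁ ∈ Icc c e → t₂ ∈ Icc c e → IntervalIntegrable g volume t₁ t₂ := by
    intro t₁ t₂ h₁ h₂
    refine IntegrableOn.intervalIntegrable (hgIcc.mono_set ?_)
    rw [uIcc_eq_union]
    exact union_subset (Icc_subset_Icc h₁.1 h₂.2) (Icc_subset_Icc h₂.1 h₁.2)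
  -- integrability of u and u² on Icc
  have huIcc : IntegrableOn u (Icc c e) := hu.integrableOn_Icc
  have hu2 : IntegrableOn (fun t => u t ^ 2) (Ioo c e) :=
    ((hu.pow 2).integrableOn_Icc).mono_set Ioo_subset_Icc_self
  have huiv : IntervalIntegrable u volume c e := by
    refine IntegrableOn.intervalIntegrable ?_
    rwa [uIcc_of_le hce.le]
  -- u has a zero
  obtain ⟨t₀, ht₀mem, ht₀⟩ : ∃ t₀ ∈ Icc c e, u t₀ = 0 := by
    by_contra hcon
    push_neg at hcon
    rcases lt_or_gt_of_ne (hcon c ⟨le_refl c, hce.le⟩) with hc | hc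
    · have hneg : ∀ t ∈ Ioo c e, u t < 0 := by
        intro t ht
        rcases lt_or_gt_of_ne (hcon t ⟨ht.1.le, ht.2.le⟩) with h' | h'
        · exact h'
        · exfalso
          have h0m : (0:ℝ) ∈ u '' Icc c t :=
            intermediate_value_Icc ht.1.le (hu.mono (Icc_subset_Icc le_rfl ht.2.le))
              ⟨hc.le, h'.le⟩
          obtain ⟨z, hz, hz0⟩ := h0m
          exact hcon z ⟨hz.1, hz.2.trans ht.2.le⟩ hz0
      have hpos : (0:ℝ) < ∫ t in c..e, -u t :=
        intervalIntegral.intervalIntegral_pos_of_pos_on huiv.neg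
          (fun t ht => neg_pos.2 (hneg t ht)) hce
      rw [intervalIntegral.integral_neg, hzero, neg_zero] at hpos
      exact lt_irrefl 0 hpos
    · have hposon : ∀ t ∈ Ioo c e, 0 < u t := by
        intro t ht
        rcases lt_or_gt_of_ne (hcon t ⟨ht.1.le, ht.2.le⟩) with h' | h'
        · exfalso
          have h0m : (0:ℝ) ∈ u '' Icc c t :=
            intermediate_value_Icc' ht.1.le (hu.mono (Icc_subset_Icc le_rfl ht.2.le))
              ⟨h'.le, hc.le⟩
          obtain ⟨z, hz, hz0⟩ := h0m
          exact hcon z ⟨hz.1, hz.2.trans ht.2.le⟩ hz0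
        · exact h'
      have hpos := intervalIntegral.intervalIntegral_pos_of_pos_on huiv hposon hce
      rw [hzero] at hpos
      exact lt_irrefl 0 hpos
  set A : ℝ := ∫ t in Ioo c e, |g t| with hA
  have hA0 : 0 ≤ A := setIntegral_nonneg measurableSet_Ioo fun t _ => abs_nonneg _
  -- interval integrals of |g| bounded by A
  have hItoA : ∀ t₁ t₂, t₁ ∈ Icc c e → t₂ ∈ Icc c e → t₁ ≤ t₂ →
      (∫ s in t₁..t₂, |g s|) ≤ A := by
    intro t₁ t₂ h₁ h₂ h12
    rw [intervalIntegral.integral_of_le h12]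
    refine setIntegral_mono_set habs
      (Filter.Eventually.of_forall fun t => abs_nonneg _) ?_
    refine (HasSubset.Subset.eventuallyLE ?_ : Ioc t₁ t₂ ≤ᶠ[ae volume] Icc c e).trans
      (Filter.EventuallyEq.le (Ioo_ae_eq_Icc).symm)
    exact (Ioc_subset_Icc_self).trans (Icc_subset_Icc h₁.1 h₂.2)
  -- pointwise bound |u t| ≤ A on Icc
  have hker : ∀ t ∈ Icc c e, |u t| ≤ A := by
    intro t ht
    have hmono : ∀ t₁ t₂, t₁ ∈ Icc c e → t₂ ∈ Icc c e → t₁ ≤ t₂ →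
        (∫ s in t₁..t₂, g s) = u t₂ - u t₁ := by
      intro t₁ t₂ h₁ h₂ h12
      refine intervalIntegral.integral_eq_sub_of_hasDerivAt_of_le h12
        (hu.mono (Icc_subset_Icc h₁.1 h₂.2))
        (fun z hz => hder z ⟨lt_of_le_of_lt h₁.1 hz.1, lt_of_lt_of_le hz.2 h₂.2⟩)
        (hgiv t₁ t₂ h₁ h₂)
    rcases le_total t₀ t with h12 | h12
    · have he : u t = ∫ s in t₀..t, g s := by
        rw [hmono t₀ t ht₀mem ht h12, ht₀, sub_zero]
      rw [he]
      calc |∫ s in t₀..t, g s| ≤ ∫ s in t₀..t, |g s| :=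
            intervalIntegral.abs_integral_le_integral_abs h12
        _ ≤ A := hItoA t₀ t ht₀mem ht h12
    · have he : u t = -∫ s in t..t₀, g s := by
        rw [hmono t t₀ ht ht₀mem h12, ht₀, zero_sub, neg_neg]
      rw [he, abs_neg]
      calc |∫ s in t..t₀, g s| ≤ ∫ s in t..t₀, |g s| :=
            intervalIntegral.abs_integral_le_integral_abs h12
        _ ≤ A := hItoA t t₀ ht ht₀mem h12
  set L : ℝ := e - c with hLdef
  -- ∫ u² ≤ L * A²
  have hstep1 : (∫ t in Ioo c e, u t ^ 2) ≤ L * A ^ 2 := by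
    have := setIntegral_mono_on hu2
      (integrableOn_const (C := A ^ 2) hvol.ne) measurableSet_Ioo
      (fun t ht => by
        have h1 := hker t (Ioo_subset_Icc_self ht)
        have h2 := abs_nonneg (u t)
        nlinarith [sq_abs (u t)])
    rwa [setIntegral_const, Real.volume_real_Ioo_of_le hce.le, ← hLdef, smul_eq_mul] at this
  -- Cauchy-Schwarz: A² ≤ L * ∫ g²
  have hstep2 : A ^ 2 ≤ L * ∫ t in Ioo c e, g t ^ 2 := by
    set m : ℝ := A / L with hm
    have h1 : ∀ t : ℝ, (|g t| - m) ^ 2 = g t ^ 2 - 2 * m * |g t| + m ^ 2 := by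
      intro t; rw [sub_sq, sq_abs]; ring
    have hint1 : IntegrableOn (fun t => g t ^ 2 - 2 * m * |g t|) (Ioo c e) :=
      hg2.sub (habs.const_mul _)
    have hexp : (∫ t in Ioo c e, (|g t| - m) ^ 2) =
        (∫ t in Ioo c e, g t ^ 2) - 2 * m * A + m ^ 2 * L := by
      simp only [h1]
      rw [integral_add hint1 (integrableOn_const (C := m ^ 2) hvol.ne),
        integral_sub hg2 (habs.const_mul _), integral_const_mul,
        setIntegral_const, Real.volume_real_Ioo_of_le hce.le, ← hLdef, smul_eq_mul]
      ring
    have h0 : 0 ≤ ∫ t in Ioo c e, (|g t| - m) ^ 2 :=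
      setIntegral_nonneg measurableSet_Ioo fun t _ => sq_nonneg _
    rw [hexp, hm] at h0
    have hL' : L ≠ 0 := ne_of_gt hL
    have h5 : A ^ 2 / L ≤ ∫ t in Ioo c e, g t ^ 2 := by
      have hh1 : 2 * (A / L) * A = 2 * (A ^ 2 / L) := by field_simp
      have hh2 : (A / L) ^ 2 * L = A ^ 2 / L := by field_simp
      rw [hh1, hh2] at h0
      linarith
    calc A ^ 2 = A ^ 2 / L * L := (div_mul_cancel₀ _ hL').symm
      _ ≤ (∫ t in Ioo c e, g t ^ 2) * L := mul_le_mul_of_nonneg_right h5 hL.le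
      _ = L * ∫ t in Ioo c e, g t ^ 2 := mul_comm _ _
  -- conclude
  have hIu : (∫ t in Ioo c e, (u t / L) ^ 2) = (∫ t in Ioo c e, u t ^ 2) / L ^ 2 := by
    simp only [div_pow]
    exact integral_div _ _
  rw [show e - c = L from rfl] at *
  rw [hIu, div_le_iff₀ (by positivity : (0:ℝ) < L ^ 2)]
  nlinarith [hstep1, hstep2, setIntegral_nonneg (μ := volume) (s := Ioo c e)
    measurableSet_Ioo (fun t _ => sq_nonneg (g t)), hL]
lemma fubini_chan {f₁ f₂ : ℝ → ℝ} {a b : ℝ} (hC : MeasurableSet (chan f₁ f₂ a b))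
    (h : ℝ × ℝ → ℝ) (hint : IntegrableOn h (chan f₁ f₂ a b)) :
    (∫ x in chan f₁ f₂ a b, h x) =
      (∫ x₁ in Ioo a b, ∫ x₂ in Ioo (f₁ x₁) (f₂ x₁), h (x₁, x₂)) ∧
    IntegrableOn (fun x₁ => ∫ x₂ in Ioo (f₁ x₁) (f₂ x₁), h (x₁, x₂)) (Ioo a b) := by
  set C := chan f₁ f₂ a b with hCdef
  have hF : Integrable (C.indicator h) (volume : Measure (ℝ × ℝ)) :=
    (integrable_indicator_iff hC).2 hint
  have hFprod : Integrable (C.indicator h) ((volume : Measure ℝ).prod volume) := by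
    rwa [← Measure.volume_eq_prod]
  have hinner : (fun x => ∫ y, C.indicator h (x, y)) =
      (Ioo a b).indicator (fun x => ∫ y in Ioo (f₁ x) (f₂ x), h (x, y)) := by
    funext x
    by_cases hx : x ∈ Ioo a b
    · rw [indicator_of_mem hx]
      have : (fun y => C.indicator h (x, y)) =
          (Ioo (f₁ x) (f₂ x)).indicator (fun y => h (x, y)) := by
        funext y
        by_cases hy : y ∈ Ioo (f₁ x) (f₂ x)
        · rw [indicator_of_mem hy]
          exact indicator_of_mem (by exact ⟨hx.1, hx.2, hy.1, hy.2⟩) h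
        · rw [indicator_of_notMem hy]
          refine indicator_of_notMem ?_ h
          intro hmem
          exact hy ⟨hmem.2.2.1, hmem.2.2.2⟩
      rw [this, integral_indicator measurableSet_Ioo]
    · rw [indicator_of_notMem hx]
      have : (fun y => C.indicator h (x, y)) = fun _ => 0 := by
        funext y
        refine indicator_of_notMem ?_ h
        intro hmem
        exact hx ⟨hmem.1, hmem.2.1⟩
      rw [this, integral_zero]
  constructor
  · rw [← integral_indicator hC, Measure.volume_eq_prod, integral_prod _ hFprod]
    have : (∫ x, ∫ y, C.indicator h (x, y)) =
        ∫ x, (Ioo a b).indicator (fun x => ∫ y in Ioo (f₁ x) (f₂ x), h (x, y)) x := by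
      rw [hinner]
    rw [this, integral_indicator measurableSet_Ioo]
  · have := hFprod.integral_prod_left
    rw [hinner] at this
    exact (integrable_indicator_iff measurableSet_Ioo).1 this


/-- Poincaré type inequality for the weighted `L²` norm of `v₁`. -/
theorem stmt_0 :
    ∃ M₀ : ℝ, 0 < M₀ ∧
      ∀ (f₁ f₂ : ℝ → ℝ) (d β : ℝ),
        ContDiff ℝ (⊤ : ℕ∞) f₁ → ContDiff ℝ (⊤ : ℕ∞) f₂ →
        0 < d → (∀ x₁ : ℝ, d ≤ f₂ x₁ - f₁ x₁) →
        (∀ x₁ : ℝ, |deriv f₁ x₁| ≤ β) → (∀ x₁ : ℝ, |deriv f₂ x₁| ≤ β) →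
        ∀ a b : ℝ, a < b →
          ∀ v₁ v₂ : ℝ × ℝ → ℝ,
            ContDiffOn ℝ 1 v₁ (closure (chan f₁ f₂ a b)) →
            ContDiffOn ℝ 1 v₂ (closure (chan f₁ f₂ a b)) →
            (∀ x₁ ∈ Ioo a b, (∫ x₂ in (f₁ x₁)..(f₂ x₁), v₁ (x₁, x₂)) = 0) →
            (∫ x in chan f₁ f₂ a b, (v₁ x / (f₂ x.1 - f₁ x.1)) ^ 2) ≤
              M₀ ^ 2 * ∫ x in chan f₁ f₂ a b, (fderiv ℝ v₁ x (0, 1)) ^ 2 := by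
  refine ⟨1, one_pos, ?_⟩
  intro f₁ f₂ d β hf₁ hf₂ hd hdle hβ₁ hβ₂ a b hab v₁ v₂ hv₁ hv₂ hflux
  have hf₁c : Continuous f₁ := hf₁.continuous
  have hf₂c : Continuous f₂ := hf₂.continuous
  set C := chan f₁ f₂ a b with hCdef
  set s := closure C with hsdef
  have hCopen : IsOpen C := by
    have hC : C = ({x : ℝ × ℝ | a < x.1} ∩ {x | x.1 < b}) ∩
        ({x : ℝ × ℝ | f₁ x.1 < x.2} ∩ {x | x.2 < f₂ x.1}) := by
      ext x; simp only [hCdef, chan, mem_setOf_eq, mem_inter_iff]; tauto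
    rw [hC]
    exact ((isOpen_lt continuous_const continuous_fst).inter
        (isOpen_lt continuous_fst continuous_const)).inter
      ((isOpen_lt (hf₁c.comp continuous_fst) continuous_snd).inter
        (isOpen_lt continuous_snd (hf₂c.comp continuous_fst)))
  have hCmeas : MeasurableSet C := hCopen.measurableSet
  have hCs : C ⊆ s := subset_closure
  -- a compact box containing C
  obtain ⟨R₁, hR₁⟩ := (isCompact_Icc (a := a) (b := b)).exists_bound_of_continuousOn
    hf₁c.continuousOn
  obtain ⟨R₂, hR₂⟩ := (isCompact_Icc (a := a) (b := b)).exists_bound_of_continuousOn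
    hf₂c.continuousOn
  set R : ℝ := max R₁ R₂ with hRdef
  have hCsub : C ⊆ Icc a b ×ˢ Icc (-R) R := by
    rintro ⟨x₁, x₂⟩ ⟨h1, h2, h3, h4⟩
    have hx : x₁ ∈ Icc a b := ⟨h1.le, h2.le⟩
    have e1 := hR₁ x₁ hx
    have e2 := hR₂ x₁ hx
    rw [Real.norm_eq_abs] at e1 e2
    have e1' := abs_le.1 e1
    have e2' := abs_le.1 e2
    refine ⟨hx, ?_, ?_⟩
    · have : -R ≤ f₁ x₁ := by
        have := le_max_left R₁ R₂
        simp only [hRdef] at *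
        linarith [e1'.1]
      exact le_trans this h3.le
    · have : f₂ x₁ ≤ R := by
        have := le_max_right R₁ R₂
        simp only [hRdef] at *
        linarith [e2'.2]
      exact le_trans h4.le this
  have hscomp : IsCompact s :=
    IsCompact.of_isClosed_subset (isCompact_Icc.prod isCompact_Icc) isClosed_closure
      (closure_minimal hCsub (isClosed_Icc.prod isClosed_Icc))
  -- bound on the derivative of v₁ on C
  obtain ⟨K, hK0, hK⟩ := bound_fderiv hscomp hv₁ hCopen hCs
  -- bound on v₁ on s
  obtain ⟨B₀, hB₀⟩ := hscomp.exists_bound_of_continuousOn hv₁.continuousOn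
  set B : ℝ := max B₀ 0 with hBdef
  have hB : ∀ x ∈ s, |v₁ x| ≤ B := fun x hx => le_trans
    (by rw [← Real.norm_eq_abs]; exact hB₀ x hx) (le_max_left _ _)
  have hB0 : 0 ≤ B := le_max_right _ _
  have hvolC : volume C < ⊤ := lt_of_le_of_lt (measure_mono hCs) hscomp.measure_lt_top
  have hdC : ∀ x₁ : ℝ, 0 < f₂ x₁ - f₁ x₁ := fun x₁ => lt_of_lt_of_le hd (hdle x₁)
  -- the two integrands
  set l : ℝ × ℝ → ℝ := fun x => (v₁ x / (f₂ x.1 - f₁ x.1)) ^ 2 with hldef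
  set r : ℝ × ℝ → ℝ := fun x => (fderiv ℝ v₁ x (0, 1)) ^ 2 with hrdef
  -- integrability of l on C
  have hlint : IntegrableOn l C := by
    refine Integrable.mono' (integrableOn_const (C := (B / d) ^ 2) hvolC.ne) ?_ ?_
    · refine ContinuousOn.aestronglyMeasurable ?_ hCmeas
      refine ContinuousOn.pow ?_ 2
      refine ContinuousOn.div (hv₁.continuousOn.mono hCs)
        (((hf₂c.comp continuous_fst).sub (hf₁c.comp continuous_fst)).continuousOn)
        (fun x _ => ne_of_gt (hdC x.1))
    · refine (ae_restrict_iff' hCmeas).2 (Filter.Eventually.of_forall fun x hx => ?_)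
      have h1 : |v₁ x| ≤ B := hB x (hCs hx)
      have h2 : d ≤ f₂ x.1 - f₁ x.1 := hdle x.1
      have habsq : |v₁ x / (f₂ x.1 - f₁ x.1)| ≤ B / d := by
        rw [abs_div, abs_of_pos (hdC x.1)]
        exact div_le_div₀ hB0 h1 hd h2
      rw [Real.norm_eq_abs, abs_pow]
      nlinarith [abs_nonneg (v₁ x / (f₂ x.1 - f₁ x.1))]
  -- integrability of r on C
  have hrint : IntegrableOn r C := by
    refine Integrable.mono' (integrableOn_const (C := K ^ 2) hvolC.ne) ?_ ?_
    · exact ((measurable_fderiv_apply_const ℝ v₁ ((0 : ℝ), (1 : ℝ))).pow_const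
        2).aestronglyMeasurable
    · refine (ae_restrict_iff' hCmeas).2 (Filter.Eventually.of_forall fun x hx => ?_)
      have h1 : ‖fderiv ℝ v₁ x (0, 1)‖ ≤ K := by
        calc ‖fderiv ℝ v₁ x (0, 1)‖ ≤ ‖fderiv ℝ v₁ x‖ * ‖((0 : ℝ), (1 : ℝ))‖ :=
              (fderiv ℝ v₁ x).le_opNorm _
          _ = ‖fderiv ℝ v₁ x‖ := by simp [Prod.norm_def]
          _ ≤ K := hK x hx
      rw [Real.norm_eq_abs, abs_pow]
      rw [Real.norm_eq_abs] at h1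
      nlinarith [abs_nonneg (fderiv ℝ v₁ x (0, 1))]
  -- Fubini for both sides
  obtain ⟨heql, hintl⟩ := fubini_chan hCmeas l hlint
  obtain ⟨heqr, hintr⟩ := fubini_chan hCmeas r hrint
  rw [one_pow, one_mul]
  show (∫ x in C, l x) ≤ ∫ x in C, r x
  rw [heql, heqr]
  refine setIntegral_mono_on hintl hintr measurableSet_Ioo ?_
  intro x₁ hx₁
  -- the slicewise Poincaré inequality
  set c : ℝ := f₁ x₁ with hcdef
  set e : ℝ := f₂ x₁ with hedef
  have hce : c < e := by have := hdC x₁; simp only [hcdef, hedef]; linarith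
  have hsubs : ∀ t ∈ Icc c e, ((x₁ : ℝ), t) ∈ s := by
    have hkey : ({x₁} ×ˢ Icc c e : Set (ℝ × ℝ)) ⊆ s := by
      rw [show (Icc c e : Set ℝ) = closure (Ioo c e) from (closure_Ioo (ne_of_lt hce)).symm,
        show ({x₁} : Set ℝ) = closure {x₁} from closure_singleton.symm, ← closure_prod_eq]
      refine closure_mono ?_
      rintro ⟨y₁, y₂⟩ ⟨hy1, hy2⟩
      rw [mem_singleton_iff] at hy1
      subst hy1
      exact ⟨hx₁.1, hx₁.2, hy2.1, hy2.2⟩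
    intro t ht
    exact hkey ⟨rfl, ht⟩
  have hucont : ContinuousOn (fun t => v₁ (x₁, t)) (Icc c e) := by
    refine (hv₁.continuousOn.comp ?_ hsubs)
    exact (continuous_const.prodMk continuous_id).continuousOn
  have hCdiff : DifferentiableOn ℝ v₁ C := (hv₁.mono hCs).differentiableOn (by simp)
  have hder : ∀ t ∈ Ioo c e, HasDerivAt (fun t => v₁ (x₁, t))
      (fderiv ℝ v₁ (x₁, t) (0, 1)) t := by
    intro t ht
    have hmem : ((x₁ : ℝ), t) ∈ C := ⟨hx₁.1, hx₁.2, ht.1, ht.2⟩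
    have hdiff : DifferentiableAt ℝ v₁ (x₁, t) :=
      (hCdiff _ hmem).differentiableAt (hCopen.mem_nhds hmem)
    have hcurve : HasDerivAt (fun t : ℝ => ((x₁ : ℝ), t)) ((0 : ℝ), (1 : ℝ)) t :=
      (hasDerivAt_const t x₁).prodMk (hasDerivAt_id t)
    exact hdiff.hasFDerivAt.comp_hasDerivAt t hcurve
  have hgmeas : Measurable (fun t => fderiv ℝ v₁ (x₁, t) (0, 1)) :=
    (measurable_fderiv_apply_const ℝ v₁ ((0 : ℝ), (1 : ℝ))).comp
      (measurable_const.prodMk measurable_id)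
  have hgK : ∀ t ∈ Ioo c e, |fderiv ℝ v₁ (x₁, t) (0, 1)| ≤ K := by
    intro t ht
    have hmem : ((x₁ : ℝ), t) ∈ C := ⟨hx₁.1, hx₁.2, ht.1, ht.2⟩
    rw [← Real.norm_eq_abs]
    calc ‖fderiv ℝ v₁ (x₁, t) (0, 1)‖ ≤ ‖fderiv ℝ v₁ (x₁, t)‖ * ‖((0 : ℝ), (1 : ℝ))‖ :=
          (fderiv ℝ v₁ (x₁, t)).le_opNorm _
      _ = ‖fderiv ℝ v₁ (x₁, t)‖ := by simp [Prod.norm_def]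
      _ ≤ K := hK _ hmem
  exact slice_poincare hce hucont hder hgmeas hgK (hflux x₁ hx₁)
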